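/- Let (X,T) be minimal. If the proximal relation coincides with the equicontinuous structure relation (i.e., coincidence rank 1), then the restriction of the induced map π_*: eE(X)e → E(X_max) to the structure group is injective, hence a group isomorphism onto E(X_max). -/

import Mathlib

/-- The Ellis semigroup of the action. -/
def Ellis (T : Type*) (X : Type*) [TopologicalSpace X] [SMul T X] : Set (X → X) :=
  closure (Set.range fun t : T => fun x : X => t • x)

/-- A two-sided ideal of a sub-semigroup `E` of `X → X` under composition. -/
def IsIdealIn {X : Type*} (E I : Set (X → X)) : Prop :=
  I ⊆ E ∧ I.Nonempty ∧ ∀ f ∈ E, ∀ g ∈ I, f ∘ g ∈ I ∧ g ∘ f ∈ I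

/-- A minimal idempotent of `E`: an idempotent belonging to every two-sided ideal. -/
def IsMinIdem {X : Type*} (E : Set (X → X)) (p : X → X) : Prop :=
  p ∈ E ∧ p ∘ p = p ∧ ∀ I : Set (X → X), IsIdealIn E I → p ∈ I

/-- The proximal relation. -/
def Proximal (T : Type*) {X : Type*} [MetricSpace X] [SMul T X] (x y : X) : Prop :=
  ∀ ε > 0, ∃ t : T, dist (t • x) (t • y) < ε

open Filter Topology Set Function Uniformity

section Aux

variable {T : Type*} [Group T] {X : Type*} [TopologicalSpace X] [MulAction T X]

lemma ellis_smul_mem (t : T) : (fun x : X => t • x) ∈ Ellis T X :=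
  subset_closure ⟨t, rfl⟩

lemma ellis_id_mem : (fun x : X => x) ∈ Ellis T X := by
  have h := ellis_smul_mem (T := T) (X := X) 1
  simpa [one_smul] using h

lemma ellis_isClosed : IsClosed (Ellis T X) := isClosed_closure

lemma ellis_smul_comp_mem (hX : ∀ t : T, Continuous fun x : X => t • x)
    (t : T) {g : X → X} (hg : g ∈ Ellis T X) :
    (fun x : X => t • g x) ∈ Ellis T X := by
  have hc : Continuous fun h : X → X => fun x : X => t • h x :=
    continuous_pi fun x => (hX t).comp (continuous_apply x)
  have himg : (fun h : X → X => fun x : X => t • h x) ''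
      (Set.range fun s : T => fun x : X => s • x) ⊆
      (Set.range fun s : T => fun x : X => s • x) := by
    rintro _ ⟨_, ⟨s, rfl⟩, rfl⟩
    exact ⟨t * s, by funext x; simp [mul_smul]⟩
  have := image_closure_subset_closure_image (s := Set.range fun s : T => fun x : X => s • x) hc
  have hmem : (fun x : X => t • g x) ∈
      closure ((fun h : X → X => fun x : X => t • h x) ''
        (Set.range fun s : T => fun x : X => s • x)) :=
    this ⟨g, hg, rfl⟩
  exact closure_mono himg hmem

lemma ellis_comp_mem (hX : ∀ t : T, Continuous fun x : X => t • x)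
    {f g : X → X} (hf : f ∈ Ellis T X) (hg : g ∈ Ellis T X) : f ∘ g ∈ Ellis T X := by
  have hc : Continuous fun h : X → X => h ∘ g :=
    continuous_pi fun x => continuous_apply (g x)
  have himg : (fun h : X → X => h ∘ g) ''
      (Set.range fun s : T => fun x : X => s • x) ⊆ Ellis T X := by
    rintro _ ⟨_, ⟨s, rfl⟩, rfl⟩
    exact ellis_smul_comp_mem hX s hg
  have := image_closure_subset_closure_image (s := Set.range fun s : T => fun x : X => s • x) hc
  have hmem : f ∘ g ∈ closure ((fun h : X → X => h ∘ g) ''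
      (Set.range fun s : T => fun x : X => s • x)) := this ⟨f, hf, rfl⟩
  have := closure_mono himg hmem
  rwa [ellis_isClosed.closure_eq] at this

/-- From membership in the Ellis semigroup, extract an ultrafilter on `T` along which the
translations converge to the given element. -/
lemma ellis_exists_ultrafilter {f : X → X} (hf : f ∈ Ellis T X) :
    ∃ V : Ultrafilter T, Tendsto (fun t : T => fun x : X => t • x) V (𝓝 f) := by
  classical
  obtain ⟨U, hU1, hU2⟩ := mem_closure_iff_ultrafilter.mp hf
  set ι : T → (X → X) := fun t => fun x : X => t • x with hι
  let σ : (X → X) → T := fun h => if hh : ∃ t, ι t = h then hh.choose else 1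
  refine ⟨U.map σ, ?_⟩
  have hcongr : (ι ∘ σ) =ᶠ[(U : Filter (X → X))] id := by
    filter_upwards [hU1] with h hh
    have hh' : ∃ t, ι t = h := hh.imp fun t ht => ht
    simp only [σ, comp_apply, dif_pos hh', id_eq]
    exact hh'.choose_spec
  have : Tendsto (ι ∘ σ) (U : Filter (X → X)) (𝓝 f) := by
    refine Tendsto.congr' hcongr.symm ?_
    exact Filter.tendsto_id'.mpr hU2
  rw [Ultrafilter.coe_map]
  rwa [tendsto_map'_iff]

lemma ellis_limit_of_ultrafilter {Z : Type*} [TopologicalSpace Z] [CompactSpace Z]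
    [MulAction T Z] (V : Ultrafilter T) :
    ∃ g ∈ Ellis T Z, Tendsto (fun t : T => fun z : Z => t • z) V (𝓝 g) := by
  set ι : T → (Z → Z) := fun t => fun z : Z => t • z with hι
  obtain ⟨g, -, hg⟩ := (isCompact_univ (X := Z → Z)).ultrafilter_le_nhds (V.map ι)
    (by simp [Filter.le_principal_iff])
  have htendsto : Tendsto ι (V : Filter T) (𝓝 g) := by
    rwa [Ultrafilter.coe_map] at hg
  refine ⟨g, ?_, htendsto⟩
  refine mem_closure_iff_ultrafilter.mpr ⟨V.map ι, ?_, by rwa [Ultrafilter.coe_map] at hg⟩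
  have : ι ⁻¹' (Set.range ι) = Set.univ := Set.eq_univ_of_forall fun t => ⟨t, rfl⟩
  simp only [Ultrafilter.mem_map]
  rw [this]
  exact Filter.univ_mem

end Aux

section Aux2

variable {T : Type*} [Group T]

/-- Semiconjugacy: if the translations converge to `f` on `X` and to `g` on `Y` along the same
ultrafilter, then `π ∘ f = g ∘ π`. -/
lemma ellis_semiconj {X Y : Type*} [TopologicalSpace X] [MulAction T X]
    [TopologicalSpace Y] [T2Space Y] [MulAction T Y]
    (π : X → Y) (hπc : Continuous π) (hπe : ∀ (t : T) (x : X), π (t • x) = t • π x)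
    {f : X → X} {g : Y → Y} (V : Ultrafilter T)
    (hf : Tendsto (fun t : T => fun x : X => t • x) V (𝓝 f))
    (hg : Tendsto (fun t : T => fun y : Y => t • y) V (𝓝 g)) :
    π ∘ f = g ∘ π := by
  funext x
  have h1 : Tendsto (fun t : T => t • x) V (𝓝 (f x)) := tendsto_pi_nhds.mp hf x
  have h2 : Tendsto (fun t : T => π (t • x)) V (𝓝 (π (f x))) :=
    (hπc.tendsto (f x)).comp h1
  have h3 : Tendsto (fun t : T => t • π x) V (𝓝 (π (f x))) := by
    refine h2.congr fun t => hπe t x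
  have h4 : Tendsto (fun t : T => t • π x) V (𝓝 (g (π x))) := tendsto_pi_nhds.mp hg (π x)
  exact tendsto_nhds_unique h3 h4

/-- From a proximal pair, produce an element of the Ellis semigroup identifying the pair. -/
lemma ellis_exists_collapse {X : Type*} [MetricSpace X] [CompactSpace X] [MulAction T X]
    {p q : X} (h : Proximal T p q) : ∃ r ∈ Ellis T X, r p = r q := by
  have hsel : ∀ n : ℕ, ∃ t : T, dist (t • p) (t • q) < 1 / ((n : ℝ) + 1) := by
    intro n
    refine h _ (by positivity)
  choose t ht using hsel
  set ι : T → (X → X) := fun s => fun x : X => s • x with hι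
  set U : Ultrafilter ℕ := Ultrafilter.of atTop with hU
  have hUle : (U : Filter ℕ) ≤ atTop := Ultrafilter.of_le _
  obtain ⟨r, -, hr⟩ := (isCompact_univ (X := X → X)).ultrafilter_le_nhds (U.map (ι ∘ t))
    (by simp [Filter.le_principal_iff])
  have htendsto : Tendsto (ι ∘ t) (U : Filter ℕ) (𝓝 r) := by
    rwa [Ultrafilter.coe_map] at hr
  have hrE : r ∈ Ellis T X := by
    refine mem_closure_iff_ultrafilter.mpr ⟨U.map (ι ∘ t), ?_, by rwa [Ultrafilter.coe_map] at hr⟩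
    simp only [Ultrafilter.mem_map]
    have : (ι ∘ t) ⁻¹' (Set.range ι) = Set.univ :=
      Set.eq_univ_of_forall fun n => ⟨t n, rfl⟩
    rw [this]; exact Filter.univ_mem
  refine ⟨r, hrE, ?_⟩
  have h1 : Tendsto (fun n : ℕ => t n • p) (U : Filter ℕ) (𝓝 (r p)) :=
    tendsto_pi_nhds.mp htendsto p
  have h2 : Tendsto (fun n : ℕ => t n • q) (U : Filter ℕ) (𝓝 (r q)) :=
    tendsto_pi_nhds.mp htendsto q
  have hd : Tendsto (fun n : ℕ => dist (t n • p) (t n • q)) (U : Filter ℕ)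
      (𝓝 (dist (r p) (r q))) := h1.dist h2
  have hd0 : Tendsto (fun n : ℕ => dist (t n • p) (t n • q)) (U : Filter ℕ) (𝓝 0) := by
    refine tendsto_of_tendsto_of_tendsto_of_le_of_le (g := fun _ : ℕ => (0 : ℝ))
      (h := fun n : ℕ => 1 / ((n : ℝ) + 1)) tendsto_const_nhds
      (tendsto_one_div_add_atTop_nhds_zero_nat.mono_left hUle)
      (fun n => dist_nonneg) (fun n => (ht n).le)
  have := tendsto_nhds_unique hd hd0
  exact dist_eq_zero.mp this

/-- A point is proximal to its image under an idempotent of the Ellis semigroup. -/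
lemma ellis_prox_idem {X : Type*} [MetricSpace X] [MulAction T X]
    {e : X → X} (heE : e ∈ Ellis T X) (hee : e ∘ e = e) (x : X) : Proximal T x (e x) := by
  intro ε hε
  set o : Set (X → X) :=
    {h : X → X | dist (h x) (e x) < ε / 2 ∧ dist (h (e x)) (e (e x)) < ε / 2} with ho
  have hoopen : IsOpen o := by
    have h1 : IsOpen {h : X → X | dist (h x) (e x) < ε / 2} :=
      isOpen_lt ((continuous_apply x).dist continuous_const) continuous_const
    have h2 : IsOpen {h : X → X | dist (h (e x)) (e (e x)) < ε / 2} :=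
      isOpen_lt ((continuous_apply (e x)).dist continuous_const) continuous_const
    exact h1.inter h2
  have hoe : e ∈ o := by constructor <;> simp [dist_self] <;> positivity
  obtain ⟨f, ⟨hd1, hd2⟩, t, rfl⟩ := mem_closure_iff.mp heE o hoopen hoe
  refine ⟨t, ?_⟩
  have heex : e (e x) = e x := congrFun hee x
  rw [heex] at hd2
  calc dist (t • x) (t • e x) ≤ dist (t • x) (e x) + dist (e x) (t • e x) := dist_triangle _ _ _
    _ < ε / 2 + ε / 2 := by
        have := (dist_comm (e x) (t • e x)).symm ▸ hd2
        exact add_lt_add hd1 (by rwa [dist_comm])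
    _ = ε := by ring

end Aux2

section Aux3

variable {T : Type*} [Group T] {X : Type*} [MetricSpace X] [CompactSpace X] [MulAction T X]

/-- The key separation lemma: two proximal points both fixed by a minimal idempotent coincide. -/
lemma minIdem_separates (hX : ∀ t : T, Continuous fun x : X => t • x)
    {e : X → X} (he : IsMinIdem (Ellis T X) e)
    {p q : X} (hpq : Proximal T p q) (hp : e p = p) (hq : e q = q) : p = q := by
  classical
  obtain ⟨heE, hee, hemin⟩ := he
  obtain ⟨r, hrE, hrpq⟩ := ellis_exists_collapse hpq
  set E : Set (X → X) := Ellis T X with hE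
  have hEclosed : IsClosed E := ellis_isClosed
  have hEcomp : IsCompact E := hEclosed.isCompact
  -- the collection of nonempty closed left ideals of E
  set S : Set (Set (X → X)) :=
    {L | L.Nonempty ∧ L ⊆ E ∧ (∀ f ∈ E, ∀ g ∈ L, f ∘ g ∈ L) ∧ IsClosed L} with hS
  have hES : E ∈ S := ⟨⟨_, ellis_id_mem⟩, le_refl _, fun f hf g hg => ellis_comp_mem hX hf hg,
    hEclosed⟩
  -- Zorn's lemma: a minimal nonempty closed left ideal exists
  obtain ⟨L₀, hL₀S, hL₀min⟩ : ∃ m ∈ S, ∀ a ∈ S, a ⊆ m → a = m := by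
    obtain ⟨m, hm⟩ := zorn_superset S (fun c hcS hchain => by
      rcases c.eq_empty_or_nonempty with rfl | hcne
      · exact ⟨E, hES, by simp⟩
      · refine ⟨⋂₀ c, ?_, fun s hs => sInter_subset_of_mem hs⟩
        have hne : (⋂₀ c).Nonempty := by
          haveI : Nonempty c := hcne.to_subtype
          have hdir : DirectedOn (· ⊇ ·) c := fun a ha b hb =>
            (hchain.total ha hb).elim (fun hab => ⟨a, ha, Set.Subset.rfl, hab⟩)
              (fun hab => ⟨b, hb, hab, Set.Subset.rfl⟩)
          refine IsCompact.nonempty_sInter_of_directed_nonempty_isCompact_isClosed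
            hdir (fun U hU => (hcS hU).1)
            (fun U hU => ((hcS hU).2.2.2).isCompact) (fun U hU => (hcS hU).2.2.2)
        obtain ⟨c₀, hc₀⟩ := hcne
        refine ⟨hne, (sInter_subset_of_mem hc₀).trans (hcS hc₀).2.1, ?_, ?_⟩
        · intro f hf g hg
          exact fun s hs => (hcS hs).2.2.1 f hf g (hg s hs)
        · exact isClosed_sInter fun s hs => (hcS hs).2.2.2)
    exact ⟨m, hm.1, fun a ha hsub => hsub.antisymm (hm.2 ha hsub)⟩
  -- for every l ∈ L₀, E ∘ l = L₀
  have hEl : ∀ l ∈ L₀, (fun h : X → X => h ∘ l) '' E = L₀ := by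
    intro l hl
    refine hL₀min _ ⟨⟨_, ⟨_, ellis_id_mem, rfl⟩⟩, ?_, ?_, ?_⟩ ?_
    · rintro _ ⟨h, hh, rfl⟩
      exact hL₀S.2.1 (hL₀S.2.2.1 h hh l hl)
    · rintro f hf _ ⟨h, hh, rfl⟩
      exact ⟨f ∘ h, ellis_comp_mem hX hf hh, rfl⟩
    · have hc : Continuous fun h : X → X => h ∘ l :=
        continuous_pi fun x => continuous_apply (l x)
      exact (hEcomp.image hc).isClosed
    · rintro _ ⟨h, hh, rfl⟩
      exact hL₀S.2.2.1 h hh l hl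
  -- the two-sided ideal L₀ ∘ E
  set I : Set (X → X) := {g | ∃ l ∈ L₀, ∃ f ∈ E, g = l ∘ f} with hI
  have hIideal : IsIdealIn E I := by
    refine ⟨?_, ?_, ?_⟩
    · rintro _ ⟨l, hl, f, hf, rfl⟩
      exact ellis_comp_mem hX (hL₀S.2.1 hl) hf
    · obtain ⟨l, hl⟩ := hL₀S.1
      exact ⟨l, l, hl, _, ellis_id_mem, by funext x; rfl⟩
    · rintro f hf _ ⟨l, hl, g, hg, rfl⟩
      refine ⟨⟨f ∘ l, hL₀S.2.2.1 f hf l hl, g, hg, rfl⟩,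
        ⟨l, hl, g ∘ f, ellis_comp_mem hX hg hf, rfl⟩⟩
  obtain ⟨l, hl, f, hf, hef⟩ := hemin I hIideal
  -- M := L₀ ∘ f ∋ e, and every element of M generates M as a left ideal
  have hMgen : ∀ l₁ ∈ L₀, ∀ l₂ ∈ L₀, ∃ h ∈ E, l₂ ∘ f = h ∘ (l₁ ∘ f) := by
    intro l₁ hl₁ l₂ hl₂
    have : l₂ ∈ (fun h : X → X => h ∘ l₁) '' E := (hEl l₁ hl₁).symm ▸ hl₂
    obtain ⟨h, hh, rfl⟩ := this
    exact ⟨h, hh, rfl⟩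
  -- r ∘ e ∈ M since e = l ∘ f
  have hrl : r ∘ l ∈ L₀ := hL₀S.2.2.1 r hrE l hl
  -- e ∈ M as e = l ∘ f, and r ∘ e = (r ∘ l) ∘ f
  obtain ⟨h, hh, hhe⟩ := hMgen (r ∘ l) hrl l hl
  -- hhe : l ∘ f = h ∘ ((r ∘ l) ∘ f), i.e. e = h ∘ (r ∘ e)
  have key : e = h ∘ (r ∘ e) := by
    rw [hef]; exact hhe
  have h1 : e p = e q := by
    have hp' : e p = h (r (e p)) := congrFun key p
    have hq' : e q = h (r (e q)) := congrFun key q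
    rw [hp, hq] at *
    rw [hp', hq', hrpq]
  rw [hp, hq] at h1
  exact h1

end Aux3

/-- Let `(X,T)` be minimal with maximal equicontinuous factor `π : X → Y`. If every
pair of points in the same fibre of `π` is proximal (coincidence rank 1), then the
induced map `π_*` restricted to the structure group `eE(X)e` is injective, hence a
group isomorphism onto `E(Y)`. -/
theorem stmt17 {T : Type*} [Group T]
    {X : Type*} [MetricSpace X] [CompactSpace X] [MulAction T X]
    {Y : Type*} [UniformSpace Y] [CompactSpace Y] [T2Space Y] [MulAction T Y]
    (hX : ∀ t : T, Continuous fun x : X => t • x)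
    (hmin : ∀ x : X, Dense (MulAction.orbit T x))
    (hYc : ∀ t : T, Continuous fun y : Y => t • y)
    (hYeq : Equicontinuous fun t : T => fun y : Y => t • y)
    (π : X → Y) (hπc : Continuous π) (hπs : Function.Surjective π)
    (hπe : ∀ (t : T) (x : X), π (t • x) = t • π x)
    (hfib : ∀ x y : X, π x = π y → Proximal T x y)
    (e : X → X) (he : IsMinIdem (Ellis T X) e) :
    ∃ Φ : (X → X) → (Y → Y),
      (∀ f ∈ Ellis T X, π ∘ f = Φ f ∘ π) ∧
      Set.BijOn Φ {g : X → X | ∃ h ∈ Ellis T X, g = e ∘ h ∘ e} (Ellis T Y) ∧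
      (∀ f ∈ {g : X → X | ∃ h ∈ Ellis T X, g = e ∘ h ∘ e},
       ∀ g' ∈ {g : X → X | ∃ h ∈ Ellis T X, g = e ∘ h ∘ e},
         Φ (f ∘ g') = Φ f ∘ Φ g') := by
  classical
  have heE : e ∈ Ellis T X := he.1
  have hee : e ∘ e = e := he.2.1
  choose sec hsec using hπs
  set Φ : (X → X) → (Y → Y) := fun f => fun y => π (f (sec y)) with hΦdef
  -- uniqueness of the semiconjugate
  have huniq : ∀ (f : X → X) (g : Y → Y), π ∘ f = g ∘ π → Φ f = g := by
    intro f g hfg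
    funext y
    have h1 : π (f (sec y)) = g (π (sec y)) := congrFun hfg (sec y)
    simp only [hΦdef]
    rw [h1, hsec]
  -- existence of the semiconjugate
  have hexist : ∀ f ∈ Ellis T X, ∃ g ∈ Ellis T Y, π ∘ f = g ∘ π := by
    intro f hf
    obtain ⟨V, hV⟩ := ellis_exists_ultrafilter hf
    obtain ⟨g, hgE, hgV⟩ := ellis_limit_of_ultrafilter (T := T) (Z := Y) V
    exact ⟨g, hgE, ellis_semiconj π hπc hπe V hV hgV⟩
  have hint : ∀ f ∈ Ellis T X, π ∘ f = Φ f ∘ π := by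
    intro f hf
    obtain ⟨g, hgE, hfg⟩ := hexist f hf
    rw [huniq f g hfg]; exact hfg
  have hΦmem : ∀ f ∈ Ellis T X, Φ f ∈ Ellis T Y := by
    intro f hf
    obtain ⟨g, hgE, hfg⟩ := hexist f hf
    rw [huniq f g hfg]; exact hgE
  -- multiplicativity on the Ellis semigroup
  have hmul : ∀ f ∈ Ellis T X, ∀ g ∈ Ellis T X, Φ (f ∘ g) = Φ f ∘ Φ g := by
    intro f hf g hg
    refine huniq _ _ ?_
    have h1 := hint f hf
    have h2 := hint g hg
    funext x
    have e2 : π (g x) = Φ g (π x) := congrFun h2 x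
    have e1 : π (f (g x)) = Φ f (π (g x)) := congrFun h1 (g x)
    simp only [Function.comp_apply]
    rw [e1, e2]
  -- π collapses e to the identity
  have hπu : UniformContinuous π := CompactSpace.uniformContinuous_of_continuous hπc
  have hue : UniformEquicontinuous fun t : T => fun y : Y => t • y :=
    CompactSpace.uniformEquicontinuous_of_equicontinuous hYeq
  have hprox_e : ∀ x : X, Proximal T x (e x) := ellis_prox_idem heE hee
  have hπe_fix : ∀ x : X, π (e x) = π x := by
    intro x
    have key : π x = π (e x) := by
      refine eq_of_uniformity fun {W} hW => ?_
      have hA : {ab : Y × Y | ∀ s : T, (s • ab.1, s • ab.2) ∈ W} ∈ 𝓤 Y := by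
        have := hue W hW
        rwa [Filter.eventually_iff] at this
      have hB : (fun p : X × X => (π p.1, π p.2)) ⁻¹'
          {ab : Y × Y | ∀ s : T, (s • ab.1, s • ab.2) ∈ W} ∈ 𝓤 X := hπu hA
      obtain ⟨ε, hε, hball⟩ := Metric.mem_uniformity_dist.mp hB
      obtain ⟨t, ht⟩ := hprox_e x ε hε
      have hmemA : ∀ s : T, (s • π (t • x), s • π (t • e x)) ∈ W := hball ht
      have h2 := hmemA t⁻¹
      rw [hπe t x, hπe t (e x)] at h2
      simpa using h2
    exact key.symm
  have hΦe : Φ e = fun y => y := by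
    funext y
    simp only [hΦdef]
    rw [hπe_fix, hsec]
  -- the structure group
  have hSGE : ∀ f : X → X, (∃ h ∈ Ellis T X, f = e ∘ h ∘ e) → f ∈ Ellis T X := by
    rintro _ ⟨h, hh, rfl⟩
    exact ellis_comp_mem hX heE (ellis_comp_mem hX hh heE)
  have hfix : ∀ f : X → X, (∃ h ∈ Ellis T X, f = e ∘ h ∘ e) → e ∘ f = f := by
    rintro _ ⟨h, hh, rfl⟩
    show (e ∘ e) ∘ (h ∘ e) = e ∘ (h ∘ e)
    rw [hee]
  refine ⟨Φ, fun f hf => hint f hf, ⟨?_, ?_, ?_⟩, ?_⟩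
  · -- MapsTo
    intro f hf
    exact hΦmem f (hSGE f hf)
  · -- InjOn
    intro f₁ hf₁ f₂ hf₂ hΦeq
    funext x
    have h1 : π (f₁ x) = Φ f₁ (π x) := congrFun (hint f₁ (hSGE f₁ hf₁)) x
    have h2 : π (f₂ x) = Φ f₂ (π x) := congrFun (hint f₂ (hSGE f₂ hf₂)) x
    have hπeq : π (f₁ x) = π (f₂ x) := by rw [h1, h2, hΦeq]
    refine minIdem_separates hX he (hfib _ _ hπeq) ?_ ?_
    · exact congrFun (hfix f₁ hf₁) x
    · exact congrFun (hfix f₂ hf₂) x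
  · -- SurjOn
    intro g hgE
    obtain ⟨V, hV⟩ := ellis_exists_ultrafilter hgE
    obtain ⟨f, hfE, hfV⟩ := ellis_limit_of_ultrafilter (T := T) (Z := X) V
    have hsc : π ∘ f = g ∘ π := ellis_semiconj π hπc hπe V hfV hV
    have hΦf : Φ f = g := huniq f g hsc
    have hfe : f ∘ e ∈ Ellis T X := ellis_comp_mem hX hfE heE
    refine ⟨e ∘ f ∘ e, ⟨f, hfE, rfl⟩, ?_⟩
    have h3 : Φ (e ∘ (f ∘ e)) = Φ e ∘ (Φ f ∘ Φ e) := by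
      rw [hmul e heE (f ∘ e) hfe, hmul f hfE e heE]
    show Φ (e ∘ (f ∘ e)) = g
    rw [h3, hΦf, hΦe]
    rfl
  · -- multiplicativity on the structure group
    intro f hf g' hg'
    exact hmul f (hSGE f hf) g' (hSGE g' hg')
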